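/- Let P and Q be finite abelian p-groups of the same order. Then ψ(P) = ψ(Q) if and only if P ≅ Q. -/

import Mathlib

/-- Sum of the orders of the elements of a group. -/
noncomputable def psi (G : Type*) [Group G] : ℕ := ∑ᶠ x : G, orderOf x

/-- `Omega p G i` is the subgroup generated by all `x` with `x ^ p ^ i = 1`. -/
def Omega (p : ℕ) (G : Type*) [Group G] (i : ℕ) : Subgroup G :=
  Subgroup.closure {x : G | x ^ p ^ i = 1}

/-- The class `CP₂`: `o(xy) ≤ max (o x) (o y)` for all `x y`. -/
def CP2 (G : Type*) [Group G] : Prop :=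
  ∀ x y : G, orderOf (x * y) ≤ max (orderOf x) (orderOf y)

open Finset

section Arith

variable {p : ℕ}

lemma geom_aux (hp : 2 ≤ p) (k : ℕ) : (p - 1) * ∑ j ∈ range k, p ^ j + 1 = p ^ k := by
  induction k with
  | zero => simp
  | succ k ih =>
    rw [sum_range_succ, mul_add, pow_succ]
    have h1 : (p - 1) * p ^ k + p ^ k = p * p ^ k := by
      have : 1 ≤ p ^ k := Nat.one_le_pow _ _ (by omega)
      rw [Nat.sub_one_mul]
      have : p ^ k ≤ p * p ^ k := Nat.le_mul_of_pos_left _ (by omega)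
      omega
    rw [mul_comm (p ^ k) p]
    omega

lemma sum_pow_lt (hp : 2 ≤ p) {d : ℕ → ℕ} (hd : StrictMono d) (N : ℕ) :
    ∑ j ∈ range N, p ^ d j < p ^ d N := by
  induction N with
  | zero => simp; positivity
  | succ N ih =>
    rw [sum_range_succ]
    have h1 : p ^ d N + p ^ d N ≤ p ^ (d N + 1) := by
      rw [pow_succ]
      nlinarith [Nat.one_le_pow (d N) p (by omega)]
    have h2 : p ^ (d N + 1) ≤ p ^ d (N + 1) :=
      Nat.pow_le_pow_right (by omega) (hd (Nat.lt_succ_self N))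
    omega

lemma top_le (hp : 2 ≤ p) {d d' : ℕ → ℕ} (hd : StrictMono d) (hd' : StrictMono d') {N : ℕ}
    (h : ∑ j ∈ range (N + 1), p ^ d j ≤ ∑ j ∈ range (N + 1), p ^ d' j) : d N ≤ d' N := by
  by_contra h'
  push_neg at h'
  have h1 : ∑ j ∈ range (N + 1), p ^ d' j < p ^ (d' N + 1) := by
    rw [sum_range_succ]
    have := sum_pow_lt hp hd' N
    have h1 : p ^ d' N + p ^ d' N ≤ p ^ (d' N + 1) := by
      rw [pow_succ]
      nlinarith [Nat.one_le_pow (d' N) p (by omega)]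
    omega
  have h2 : p ^ (d' N + 1) ≤ p ^ d N := Nat.pow_le_pow_right (by omega) (by omega)
  have h3 : p ^ d N ≤ ∑ j ∈ range (N + 1), p ^ d j := by
    rw [sum_range_succ]; exact Nat.le_add_left _ _
  omega

lemma sum_pow_inj (hp : 2 ≤ p) : ∀ (N : ℕ) (d d' : ℕ → ℕ), StrictMono d → StrictMono d' →
    (∑ j ∈ range N, p ^ d j = ∑ j ∈ range N, p ^ d' j) → ∀ j < N, d j = d' j := by
  intro N
  induction N with
  | zero => intro d d' _ _ _ j hj; omega
  | succ N ih =>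
    intro d d' hd hd' hsum j hj
    have hN : d N = d' N :=
      le_antisymm (top_le hp hd hd' hsum.le) (top_le hp hd' hd hsum.ge)
    have hsum' : ∑ j ∈ range N, p ^ d j = ∑ j ∈ range N, p ^ d' j := by
      rw [sum_range_succ, sum_range_succ, hN] at hsum
      omega
    rcases Nat.lt_succ_iff_lt_or_eq.mp hj with h | h
    · exact ih d d' hd hd' hsum' j h
    · rw [h]; exact hN

end Arith

section Counting

variable {p : ℕ}

/-- number of solutions of `x ^ n = 1`. -/
noncomputable def fcnt (G : Type*) [Group G] (n : ℕ) : ℕ := Nat.card {x : G // x ^ n = 1}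

lemma fcnt_congr {G H : Type*} [Group G] [Group H] (e : G ≃* H) (n : ℕ) :
    fcnt G n = fcnt H n := by
  refine Nat.card_congr (e.toEquiv.subtypeEquiv fun x => ?_)
  show x ^ n = 1 ↔ e x ^ n = 1
  rw [← map_pow, MulEquiv.map_eq_one_iff]

lemma fcnt_filter (G : Type*) [Group G] [Fintype G] [DecidableEq G] (n : ℕ) :
    fcnt G n = (univ.filter fun x : G => x ^ n = 1).card := by
  simp [fcnt, Nat.card_eq_fintype_card, Fintype.card_subtype]

lemma fcnt_dvd (G : Type*) [CommGroup G] [Finite G] (m : ℕ) : fcnt G m ∣ Nat.card G := by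
  have h : fcnt G m = Nat.card ((powMonoidHom m : G →* G).ker) := by
    refine Nat.card_congr (Equiv.subtypeEquivRight fun x => ?_)
    simp [MonoidHom.mem_ker, powMonoidHom_apply]
  rw [h]
  exact Subgroup.card_subgroup_dvd_card _

lemma fcnt_mono (G : Type*) [Group G] [Finite G] (j : ℕ) :
    fcnt G (p ^ j) ≤ fcnt G (p ^ (j + 1)) := by
  refine Nat.card_le_card_of_injective
    (fun x => (⟨x.1, by rw [pow_succ, pow_mul, x.2, one_pow]⟩ :
      {x : G // x ^ p ^ (j + 1) = 1})) ?_
  intro a b hab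
  simpa [Subtype.ext_iff] using hab

lemma fcnt_all (G : Type*) [Group G] {n : ℕ} (h : ∀ x : G, x ^ n = 1) :
    fcnt G n = Nat.card G :=
  Nat.card_congr (Equiv.subtypeUnivEquiv h)

lemma psi_identity (G : Type*) [Group G] [Fintype G] [DecidableEq G] (hp : p.Prime) {N : ℕ}
    (hG : ∀ x : G, x ^ p ^ N = 1) :
    psi G + (p - 1) * ∑ j ∈ range N, p ^ j * fcnt G (p ^ j)
      = Fintype.card G * (1 + (p - 1) * ∑ j ∈ range N, p ^ j) := by
  have key : ∀ x : G, orderOf x + (p - 1) * ∑ j ∈ range N, p ^ j * (if x ^ p ^ j = 1 then 1 else 0)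
      = 1 + (p - 1) * ∑ j ∈ range N, p ^ j := by
    intro x
    obtain ⟨k, hkN, hord⟩ : ∃ k, k ≤ N ∧ orderOf x = p ^ k := by
      obtain ⟨k, hk, he⟩ := (Nat.dvd_prime_pow hp).mp (orderOf_dvd_of_pow_eq_one (hG x))
      exact ⟨k, hk, he⟩
    have hiff : ∀ j, (x ^ p ^ j = 1) ↔ k ≤ j := by
      intro j
      rw [← orderOf_dvd_iff_pow_eq_one, hord, Nat.pow_dvd_pow_iff_le_right hp.one_lt]
    have hite : ∑ j ∈ range N, p ^ j * (if x ^ p ^ j = 1 then 1 else 0)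
        = ∑ j ∈ Ico k N, p ^ j := by
      rw [show (Ico k N) = (range N).filter (fun j => x ^ p ^ j = 1) by
        ext j; simp [mem_Ico, mem_filter, mem_range, hiff]; omega]
      rw [sum_filter]
      refine sum_congr rfl fun j _ => ?_
      split_ifs <;> simp
    have hsplit : ∑ j ∈ range k, p ^ j + ∑ j ∈ Ico k N, p ^ j = ∑ j ∈ range N, p ^ j := by
      rw [range_eq_Ico, range_eq_Ico]
      exact sum_Ico_consecutive (fun j : ℕ => p ^ j) (Nat.zero_le _) hkN
    have hgeom := geom_aux hp.two_le k
    have hmul2 : (p - 1) * ∑ j ∈ range N, p ^ j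
        = (p - 1) * (∑ j ∈ range k, p ^ j + ∑ j ∈ Ico k N, p ^ j) := by rw [hsplit]
    have hmul : (p - 1) * (∑ j ∈ range k, p ^ j + ∑ j ∈ Ico k N, p ^ j)
        = (p - 1) * ∑ j ∈ range k, p ^ j + (p - 1) * ∑ j ∈ Ico k N, p ^ j := mul_add _ _ _
    rw [hite, hord]
    omega
  have hsum := Finset.sum_congr rfl (fun x (_ : x ∈ (univ : Finset G)) => key x)
  rw [Finset.sum_add_distrib, ← Finset.mul_sum, Finset.sum_comm] at hsum
  have hinner : ∀ j, ∑ x : G, p ^ j * (if x ^ p ^ j = 1 then 1 else 0)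
      = p ^ j * fcnt G (p ^ j) := by
    intro j
    rw [← Finset.mul_sum, fcnt_filter, Finset.card_filter]
  simp only [hinner] at hsum
  have hpsi : psi G = ∑ x : G, orderOf x := finsum_eq_sum_of_fintype _
  rw [Finset.sum_const, Finset.card_univ, smul_eq_mul] at hsum
  rw [hpsi]
  exact hsum

end Counting

section Cyclic

variable {p : ℕ}

lemma cyclic_count {α : Type*} [Group α] [IsCyclic α] [Fintype α] [DecidableEq α] {n : ℕ}
    (hn : n ≠ 0) (hd : n ∣ Fintype.card α) :
    (univ.filter fun x : α => x ^ n = 1).card = n := by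
  rw [← sum_card_orderOf_eq_card_pow_eq_one hn]
  have h1 : ∀ m ∈ n.divisors,
      (Finset.univ.filter fun x : α => orderOf x = m).card = m.totient := by
    intro m hm
    exact IsCyclic.card_orderOf_eq_totient (dvd_trans (Nat.dvd_of_mem_divisors hm) hd)
  rw [Finset.sum_congr rfl h1]
  exact Nat.sum_totient n

lemma zmod_count (hp : p.Prime) (e j : ℕ) :
    fcnt (Multiplicative (ZMod (p ^ e))) (p ^ j) = p ^ min e j := by
  haveI : NeZero (p ^ e) := ⟨pow_ne_zero _ hp.pos.ne'⟩
  classical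
  have hcard : Fintype.card (Multiplicative (ZMod (p ^ e))) = p ^ e := by
    rw [Fintype.card_congr Multiplicative.toAdd]
    exact ZMod.card _
  have hall : ∀ x : Multiplicative (ZMod (p ^ e)), x ^ p ^ e = 1 := fun x => by
    have h : x ^ Fintype.card (Multiplicative (ZMod (p ^ e))) = 1 := pow_card_eq_one
    rwa [hcard] at h
  have hiff : ∀ x : Multiplicative (ZMod (p ^ e)),
      (x ^ p ^ j = 1) ↔ x ^ p ^ min e j = 1 := by
    intro x
    rw [← orderOf_dvd_iff_pow_eq_one, ← orderOf_dvd_iff_pow_eq_one]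
    obtain ⟨k, hk, hord⟩ := (Nat.dvd_prime_pow hp).mp (orderOf_dvd_of_pow_eq_one (hall x))
    rw [hord, Nat.pow_dvd_pow_iff_le_right hp.one_lt, Nat.pow_dvd_pow_iff_le_right hp.one_lt]
    omega
  rw [fcnt_filter, Finset.filter_congr (fun x _ => hiff x),
    cyclic_count (pow_ne_zero _ hp.pos.ne') (by rw [hcard]; exact pow_dvd_pow p (min_le_left _ _))]

lemma pi_count {ι : Type*} [Fintype ι] (M : ι → Type*) [∀ i, Group (M i)] (n : ℕ) :
    fcnt (∀ i, M i) n = ∏ i, fcnt (M i) n := by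
  have e : {x : ∀ i, M i // x ^ n = 1} ≃ ∀ i, {y : M i // y ^ n = 1} :=
    { toFun := fun x i => ⟨x.1 i, congrFun x.2 i⟩
      invFun := fun y => ⟨fun i => (y i).1, funext fun i => (y i).2⟩
      left_inv := fun x => rfl
      right_inv := fun y => rfl }
  rw [fcnt, Nat.card_congr e, Nat.card_pi]
  rfl

end Cyclic

section Matching

lemma min_step {ι : Type*} [Fintype ι] [DecidableEq ι] (e : ι → ℕ) (j : ℕ) :
    ∑ i, min (e i) (j + 1) = ∑ i, min (e i) j + (univ.filter fun i => j + 1 ≤ e i).card := by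
  rw [Finset.card_filter, ← Finset.sum_add_distrib]
  refine Finset.sum_congr rfl fun i _ => ?_
  simp only [Nat.min_def]
  split_ifs <;> omega

lemma filter_split {ι : Type*} [Fintype ι] [DecidableEq ι] (e : ι → ℕ) (k : ℕ) :
    (univ.filter fun i => k + 1 ≤ e i).card
      = (univ.filter fun i => e i = k + 1).card + (univ.filter fun i => k + 1 + 1 ≤ e i).card := by
  rw [Finset.card_filter, Finset.card_filter, Finset.card_filter, ← Finset.sum_add_distrib]
  refine Finset.sum_congr rfl fun i _ => ?_
  split_ifs <;> omega

lemma exists_matching {ι ι' : Type*} [Fintype ι] [Fintype ι'] (e : ι → ℕ) (e' : ι' → ℕ)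
    (h : ∀ j, ∑ i, min (e i) j = ∑ i', min (e' i') j)
    (he : ∀ i, 1 ≤ e i) (he' : ∀ i', 1 ≤ e' i') :
    ∃ σ : ι ≃ ι', ∀ i, e' (σ i) = e i := by
  classical
  have hge : ∀ k, (univ.filter fun i => k + 1 ≤ e i).card
      = (univ.filter fun i' => k + 1 ≤ e' i').card := by
    intro k
    have h1 := min_step e k
    have h2 := min_step e' k
    have h3 := h k
    have h4 := h (k + 1)
    omega
  have heq : ∀ k, (univ.filter fun i => e i = k).card
      = (univ.filter fun i' => e' i' = k).card := by
    intro k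
    match k with
    | 0 =>
      rw [Finset.filter_false_of_mem (fun i _ => by have := he i; omega),
        Finset.filter_false_of_mem (fun i _ => by have := he' i; omega)]
      rfl
    | k + 1 =>
      have h1 := filter_split e k
      have h2 := filter_split e' k
      have h3 := hge k
      have h4 := hge (k + 1)
      omega
  have τ : ∀ k, {i // e i = k} ≃ {i' // e' i' = k} := fun k =>
    Fintype.equivOfCardEq (by rw [Fintype.card_subtype, Fintype.card_subtype, heq k])
  refine ⟨(Equiv.sigmaFiberEquiv e).symm.trans
    ((Equiv.sigmaCongrRight τ).trans (Equiv.sigmaFiberEquiv e')), fun i => ?_⟩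
  exact (τ (e i) ⟨i, rfl⟩).2

end Matching

section Classify

variable {p : ℕ}

def piMulEquiv {ι ι' : Type*} (M : ι' → Type*) [∀ i', CommGroup (M i')] (σ : ι ≃ ι') :
    ((i : ι) → M (σ i)) ≃* ((i' : ι') → M i') :=
  { Equiv.piCongrLeft M σ with
    map_mul' := fun f g => by
      funext b
      rcases σ.surjective b with ⟨a, rfl⟩
      simp only [Equiv.toFun_as_coe, Pi.mul_apply, Equiv.piCongrLeft_apply_apply] }

lemma classify (G : Type*) [CommGroup G] [Finite G] (hp : p.Prime) (hG : IsPGroup p G) :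
    ∃ (ι : Type) (_ : Fintype ι) (e : ι → ℕ), (∀ i, 1 ≤ e i) ∧
      Nonempty (G ≃* ((i : ι) → Multiplicative (ZMod (p ^ e i)))) := by
  haveI : Fact p.Prime := ⟨hp⟩
  obtain ⟨ι, hι, n, h1, ⟨f⟩⟩ := CommGroup.equiv_prod_multiplicative_zmod_of_finite G
  haveI := hι
  have hcard : Nat.card G = ∏ i, n i := by
    rw [Nat.card_congr f.toEquiv, Nat.card_pi]
    exact Finset.prod_congr rfl fun i _ => by
      rw [Nat.card_congr Multiplicative.toAdd, Nat.card_zmod]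
  obtain ⟨m, hm⟩ := IsPGroup.iff_card.mp hG
  have hpdvd : ∀ i, ∃ k, n i = p ^ k := by
    intro i
    have : n i ∣ p ^ m := by
      rw [← hm, hcard]
      exact Finset.dvd_prod_of_mem n (Finset.mem_univ i)
    obtain ⟨k, _, hk⟩ := (Nat.dvd_prime_pow hp).mp this
    exact ⟨k, hk⟩
  choose k hk using hpdvd
  have hn : n = fun i => p ^ k i := funext hk
  subst hn
  refine ⟨ι, hι, k, fun i => ?_, ⟨f⟩⟩
  have h2 : 1 < p ^ k i := h1 i
  by_contra hnk
  have h3 : k i = 0 := by omega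
  rw [h3, pow_zero] at h2
  omega

lemma psi_congr {G H : Type*} [Group G] [Group H] [Finite G] [Finite H] (e : G ≃* H) :
    psi G = psi H := by
  haveI := Fintype.ofFinite G
  haveI := Fintype.ofFinite H
  rw [psi, psi, finsum_eq_sum_of_fintype, finsum_eq_sum_of_fintype]
  exact Fintype.sum_equiv e.toEquiv _ _ fun x =>
    (orderOf_injective e.toMonoidHom e.injective x).symm

theorem stmt_7 {p : ℕ} (hp : p.Prime) (P Q : Type*) [CommGroup P] [Finite P]
    [CommGroup Q] [Finite Q] (hPp : IsPGroup p P) (hQp : IsPGroup p Q)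
    (hcard : Nat.card P = Nat.card Q) :
    psi P = psi Q ↔ Nonempty (P ≃* Q) := by
  constructor
  · intro hpsi
    haveI : Fact p.Prime := ⟨hp⟩
    classical
    haveI := Fintype.ofFinite P
    haveI := Fintype.ofFinite Q
    obtain ⟨n, hn⟩ := IsPGroup.iff_card.mp hPp
    have hnQ : Nat.card Q = p ^ n := by rw [← hcard, hn]
    have hPall : ∀ x : P, x ^ p ^ n = 1 := fun x => by
      have h : x ^ Nat.card P = 1 := pow_card_eq_one'
      rwa [hn] at h
    have hQall : ∀ x : Q, x ^ p ^ n = 1 := fun x => by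
      have h : x ^ Nat.card Q = 1 := pow_card_eq_one'
      rwa [hnQ] at h
    have hidP := psi_identity P hp hPall
    have hidQ := psi_identity Q hp hQall
    have hcardPQ : Fintype.card P = Fintype.card Q := by
      rw [← Nat.card_eq_fintype_card, ← Nat.card_eq_fintype_card, hcard]
    have hS : ∑ j ∈ range n, p ^ j * fcnt P (p ^ j)
        = ∑ j ∈ range n, p ^ j * fcnt Q (p ^ j) := by
      rw [hpsi, hcardPQ] at hidP
      have h1 : (p - 1) * ∑ j ∈ range n, p ^ j * fcnt P (p ^ j)
          = (p - 1) * ∑ j ∈ range n, p ^ j * fcnt Q (p ^ j) := by omega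
      exact Nat.eq_of_mul_eq_mul_left (by have := hp.two_le; omega) h1
    have hpowP : ∀ j, p ^ Nat.log p (fcnt P (p ^ j)) = fcnt P (p ^ j) := by
      intro j
      obtain ⟨c, _, hc⟩ := (Nat.dvd_prime_pow hp).mp (hn ▸ fcnt_dvd P (p ^ j))
      rw [hc, Nat.log_pow hp.one_lt]
    have hpowQ : ∀ j, p ^ Nat.log p (fcnt Q (p ^ j)) = fcnt Q (p ^ j) := by
      intro j
      obtain ⟨c, _, hc⟩ := (Nat.dvd_prime_pow hp).mp (hnQ ▸ fcnt_dvd Q (p ^ j))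
      rw [hc, Nat.log_pow hp.one_lt]
    have hdP : StrictMono (fun j => j + Nat.log p (fcnt P (p ^ j))) := by
      refine strictMono_nat_of_lt_succ fun j => ?_
      have h1 := fcnt_mono P (p := p) j
      rw [← hpowP j, ← hpowP (j + 1)] at h1
      have h2 := (Nat.pow_le_pow_iff_right hp.one_lt).mp h1
      omega
    have hdQ : StrictMono (fun j => j + Nat.log p (fcnt Q (p ^ j))) := by
      refine strictMono_nat_of_lt_succ fun j => ?_
      have h1 := fcnt_mono Q (p := p) j
      rw [← hpowQ j, ← hpowQ (j + 1)] at h1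
      have h2 := (Nat.pow_le_pow_iff_right hp.one_lt).mp h1
      omega
    have hsum' : ∑ j ∈ range n, p ^ (j + Nat.log p (fcnt P (p ^ j)))
        = ∑ j ∈ range n, p ^ (j + Nat.log p (fcnt Q (p ^ j))) := by
      have hP' : ∀ j, p ^ (j + Nat.log p (fcnt P (p ^ j))) = p ^ j * fcnt P (p ^ j) := fun j => by
        rw [pow_add, hpowP j]
      have hQ' : ∀ j, p ^ (j + Nat.log p (fcnt Q (p ^ j))) = p ^ j * fcnt Q (p ^ j) := fun j => by
        rw [pow_add, hpowQ j]
      simp_rw [hP', hQ']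
      exact hS
    have hd := sum_pow_inj hp.two_le n _ _ hdP hdQ hsum'
    have hf : ∀ j, fcnt P (p ^ j) = fcnt Q (p ^ j) := by
      intro j
      rcases lt_or_ge j n with h | h
      · have h3 := hd j h
        rw [← hpowP j, ← hpowQ j]
        congr 1
        omega
      · have hpow : p ^ j = p ^ n * p ^ (j - n) := by rw [← pow_add]; congr 1; omega
        rw [fcnt_all P (fun x => by rw [hpow, pow_mul, hPall x, one_pow]),
          fcnt_all Q (fun x => by rw [hpow, pow_mul, hQall x, one_pow]), hcard]
    obtain ⟨ι, hι, e, he1, ⟨eP⟩⟩ := classify P hp hPp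
    obtain ⟨ι', hι', e', he1', ⟨eQ⟩⟩ := classify Q hp hQp
    haveI := hι
    haveI := hι'
    have hs : ∀ j, ∑ i, min (e i) j = ∑ i', min (e' i') j := by
      intro j
      have h1 : fcnt P (p ^ j) = p ^ ∑ i, min (e i) j := by
        rw [fcnt_congr eP, pi_count]
        simp_rw [zmod_count hp]
        rw [Finset.prod_pow_eq_pow_sum]
      have h2 : fcnt Q (p ^ j) = p ^ ∑ i', min (e' i') j := by
        rw [fcnt_congr eQ, pi_count]
        simp_rw [zmod_count hp]
        rw [Finset.prod_pow_eq_pow_sum]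
      have h3 := hf j
      rw [h1, h2] at h3
      exact Nat.pow_right_injective hp.two_le h3
    obtain ⟨σ, hσ⟩ := exists_matching e e' hs he1 he1'
    have he : e = fun i => e' (σ i) := funext fun i => (hσ i).symm
    subst he
    exact ⟨eP.trans ((piMulEquiv (fun i' => Multiplicative (ZMod (p ^ e' i'))) σ).trans eQ.symm)⟩
  · rintro ⟨e⟩
    exact psi_congr e
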